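/- Let σ : F_q^n → F_q^n be an F_q-linear map and let C be a q-ary [n,k] linear code with generator matrix G (a k×n matrix over F_q whose rows form a basis of C). Let G^σ denote the k×n matrix whose i-th row is σ applied to the i-th row of G. Then dim_{F_q}(C ∩ C^{⊥_σ}) = k − rank(G·(G^σ)^T). -/

import Mathlib

open scoped BigOperators
open Matrix

/-- The Euclidean dual of a linear code `C ⊆ F^ι`:
`C^⊥ = {b | ∀ c ∈ C, ∑ i, b i * c i = 0}`. -/
def dualCode {F : Type*} [Field F] {ι : Type*} [Fintype ι]
    (C : Submodule F (ι → F)) : Submodule F (ι → F) where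
  carrier := {b | ∀ c ∈ C, ∑ i, b i * c i = 0}
  zero_mem' := by intro c hc; simp
  add_mem' := by
    intro x y hx hy c hc
    simp only [Set.mem_setOf_eq, Pi.add_apply, add_mul, Finset.sum_add_distrib,
      hx c hc, hy c hc, add_zero]
  smul_mem' := by
    intro r x hx c hc
    simp only [Set.mem_setOf_eq, Pi.smul_apply, smul_eq_mul, mul_assoc,
      ← Finset.mul_sum, hx c hc, mul_zero]

/-- Let `σ : F_q^n → F_q^n` be an `F_q`-linear map and `C` a `q`-ary `[n,k]` linear code
with generator matrix `G` (its rows form a basis of `C`).  Let `G^σ` be the matrix whose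
`i`-th row is `σ` applied to the `i`-th row of `G`.  Then
`dim (C ∩ C^{⊥_σ}) = k - rank (G * (G^σ)ᵀ)`, where `C^{⊥_σ} = (σ(C))^⊥`. -/
theorem dim_hull_eq_k_sub_rank {F : Type*} [Field F] {n k : ℕ}
    (σ : (Fin n → F) →ₗ[F] (Fin n → F))
    (C : Submodule F (Fin n → F)) (G : Matrix (Fin k) (Fin n) F)
    (hspan : Submodule.span F (Set.range fun i => G i) = C)
    (hli : LinearIndependent F fun i => G i) :
    Module.finrank F ↥(C ⊓ dualCode (C.map σ)) =
      k - (G * (Matrix.of fun i => σ (G i))ᵀ).rank := by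
  classical
  set M : Matrix (Fin k) (Fin k) F := G * (Matrix.of fun i => σ (G i))ᵀ with hM
  -- the linear map a ↦ a ᵥ* G
  have hφinj : Function.Injective G.vecMulLinear := by
    rw [Matrix.coe_vecMulLinear] at *
    exact Matrix.vecMul_injective_iff.mpr hli
  -- membership in dualCode (C.map σ)
  have hdual : ∀ x : Fin n → F, x ∈ dualCode (C.map σ) ↔
      ∀ j : Fin k, ∑ t, x t * σ (G j) t = 0 := by
    intro x
    constructor
    · intro hx j
      exact hx (σ (G j)) (Submodule.mem_map_of_mem
        (hspan ▸ Submodule.subset_span ⟨j, rfl⟩))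
    · intro h c hc
      obtain ⟨c', hc', rfl⟩ := hc
      rw [← hspan] at hc'
      -- linear functional ψ c = ∑ t, x t * c t
      let ψ : (Fin n → F) →ₗ[F] F :=
        { toFun := fun c => ∑ t, x t * c t
          map_add' := fun a b => by
            simp [Pi.add_apply, mul_add, Finset.sum_add_distrib]
          map_smul' := fun r a => by
            simp [Finset.mul_sum, mul_left_comm] }
      have : Submodule.span F (Set.range fun i => G i) ≤ LinearMap.ker (ψ.comp σ) := by
        rw [Submodule.span_le, Set.range_subset_iff]
        intro i
        exact h i
      exact this hc'
  have hcompute : ∀ (a : Fin k → F) (j : Fin k),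
      (Mᵀ *ᵥ a) j = ∑ t, (G.vecMulLinear a) t * σ (G j) t := by
    intro a j
    simp only [Matrix.mulVec, dotProduct, Matrix.transpose_apply, hM,
      Matrix.mul_apply, Matrix.of_apply, Matrix.vecMulLinear_apply,
      Matrix.vecMul, Finset.sum_mul]
    rw [Finset.sum_comm]
    congr 1; funext t; congr 1; funext i; ring
  -- the key submodule identity
  have hkey : C ⊓ dualCode (C.map σ) =
      Submodule.map G.vecMulLinear (LinearMap.ker Mᵀ.mulVecLin) := by
    ext x
    simp only [Submodule.mem_inf, Submodule.mem_map, LinearMap.mem_ker]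
    constructor
    · rintro ⟨hxC, hxD⟩
      rw [← hspan, show (Set.range fun i => G i) = Set.range G.row from rfl,
        ← range_vecMulLinear] at hxC
      obtain ⟨a, rfl⟩ := hxC
      refine ⟨a, ?_, rfl⟩
      funext j
      rw [hdual] at hxD
      rw [Matrix.mulVecLin_apply, hcompute a j, hxD j]; rfl
    · rintro ⟨a, ha, rfl⟩
      constructor
      · rw [← hspan, show (Set.range fun i => G i) = Set.range G.row from rfl,
          ← range_vecMulLinear]; exact ⟨a, rfl⟩
      · rw [hdual]
        intro j
        have hj := congr_fun ha j
        rw [Matrix.mulVecLin_apply, hcompute a j] at hj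
        exact hj
  rw [hkey,
    LinearEquiv.finrank_eq (Submodule.equivMapOfInjective G.vecMulLinear hφinj
      (LinearMap.ker Mᵀ.mulVecLin)).symm]
  have hrn := LinearMap.finrank_range_add_finrank_ker Mᵀ.mulVecLin
  rw [Module.finrank_pi, Fintype.card_fin] at hrn
  have hrank : Mᵀ.rank = Module.finrank F (LinearMap.range Mᵀ.mulVecLin) := rfl
  rw [← Matrix.rank_transpose M, hrank]
  omega
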